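/- Let n ≥ 1 and d ≥ 1 be integers. There exist constants C_1 = C_1(n,d) > 0 and C_3 = C_3(n,d) > 0, depending only on n and d, with the following property: for every C^{d+1} function f on B^n with M_0(f) = 1 and every C^{d+1} curve ω : [-1,1] → B^n satisfying 0 < ‖dω(t)‖ ≤ 1 for all t ∈ [-1,1] and ν_d(ω) ≤ C_3, setting g(t) = f(ω(t)), one has M_{d+1}(f) ≥ (1/2) · C_1 · ( M_{d+1}(g) − 1/10 ). -/

import Mathlib

set_option maxHeartbeats 1000000


open scoped RealInnerProductSpace
noncomputable section

/-- Euclidean space ℝ^n. -/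
abbrev En (n : ℕ) := EuclideanSpace ℝ (Fin n)

/-- Maximum of absolute values of all partial derivatives of order `l` of `f` at `z`. -/
def partialMax (n l : ℕ) (f : En n → ℝ) (z : En n) : ℝ :=
  ⨆ α : Fin l → Fin n,
    |iteratedFDeriv ℝ l f z (fun j => EuclideanSpace.single (α j) (1 : ℝ))|

/-- `M_l(f)`: sup over the closed unit ball of the max partial derivative of order `l`. -/
def Ml (n l : ℕ) (f : En n → ℝ) : ℝ :=
  ⨆ z : Metric.closedBall (0 : En n) 1, partialMax n l f (z : En n)

/-- The class `U_d(Z)` of normalized `C^{d+1}` functions vanishing on `Z`. -/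
def Ud (n d : ℕ) (Z : Set (En n)) : Set (En n → ℝ) :=
  {f | ContDiff ℝ (d + 1 : ℕ) f ∧ (∀ z ∈ Z, f z = 0) ∧ Ml n 0 f = 1}

/-- The `d`-rigidity `RG_d(Z)`. -/
def RG (n d : ℕ) (Z : Set (En n)) : ℝ :=
  sInf (Ml n (d + 1) '' Ud n d Z)

/-- `‖d^k ω(t)‖`: max over coordinates of the `k`-th derivative of the curve `ω` at `t`. -/
def curveDer (n k : ℕ) (ω : ℝ → En n) (t : ℝ) : ℝ :=
  ⨆ i : Fin n, |iteratedDeriv k ω t i|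

/-- `ν_d(ω,t)`: max over `2 ≤ k ≤ d+1` of `‖d^k ω(t)‖`. -/
def nuAt (n d : ℕ) (ω : ℝ → En n) (t : ℝ) : ℝ :=
  ⨆ k : {k : ℕ // 2 ≤ k ∧ k ≤ d + 1}, curveDer n (k : ℕ) ω t

/-- `ν_d(ω)`: max over `t ∈ [-1,1]` of `ν_d(ω,t)`. -/
def nuCurve (n d : ℕ) (ω : ℝ → En n) : ℝ :=
  ⨆ t : Set.Icc (-1 : ℝ) 1, nuAt n d ω (t : ℝ)

/-- `M_k(ω)`: max over `t ∈ [-1,1]` of `‖d^k ω(t)‖`. -/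
def Mkc (n k : ℕ) (ω : ℝ → En n) : ℝ :=
  ⨆ t : Set.Icc (-1 : ℝ) 1, curveDer n k ω (t : ℝ)

/-- Membership in the family `Ω_d(Z,z₀)` of admissible curves. -/
def InOmega (n d : ℕ) (Z : Set (En n)) (z₀ : En n) (ω : ℝ → En n) : Prop :=
  ContDiff ℝ (d + 1 : ℕ) ω ∧
  (∀ t ∈ Set.Icc (-1 : ℝ) 1, ω t ∈ Metric.closedBall (0 : En n) 1) ∧
  (∃ t ∈ Set.Icc (-1 : ℝ) 1, ω t = z₀) ∧
  (∃ z : Fin (d + 1) → En n, Function.Injective z ∧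
    ∀ j, z j ∈ Z ∧ ∃ t ∈ Set.Icc (-1 : ℝ) 1, ω t = z j) ∧
  (∀ t ∈ Set.Icc (-1 : ℝ) 1, 0 < curveDer n 1 ω t ∧ curveDer n 1 ω t ≤ 1) ∧
  nuCurve n d ω ≤ 1

/-- Pointwise `d`-thickness `ν_d(Z,z₀)`. -/
def nuZpt (n d : ℕ) (Z : Set (En n)) (z₀ : En n) : ℝ :=
  sInf (nuCurve n d '' {ω | InOmega n d Z z₀ ω})

/-- `d`-thickness `ν_d(Z)`. -/
def nuZ (n d : ℕ) (Z : Set (En n)) : ℝ :=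
  ⨆ z₀ : Metric.sphere (0 : En n) 1, nuZpt n d Z (z₀ : En n)

/-- Sup of `|P|` over a set `S`. -/
def polySup (n : ℕ) (P : MvPolynomial (Fin n) ℝ) (S : Set (En n)) : ℝ :=
  ⨆ x : S, |MvPolynomial.eval (fun i => (x : En n) i) P|

/-- The Remez constant `R_d(Z)` (value in `[1,∞]`). -/
def Remez (n d : ℕ) (Z : Set (En n)) : ENNReal :=
  sInf {K : ENNReal | 1 ≤ K ∧ ∀ P : MvPolynomial (Fin n) ℝ, P.totalDegree ≤ d →
    ENNReal.ofReal (polySup n P (Metric.closedBall (0 : En n) 1)) ≤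
      K * ENNReal.ofReal (polySup n P Z)}

/-- The inverse Remez constant `R̂_d(Z) = 1/R_d(Z)` (zero when `R_d(Z) = ∞`). -/
def invRemez (n d : ℕ) (Z : Set (En n)) : ℝ :=
  ((Remez n d Z)⁻¹).toReal

/-- The closed axis-parallel grid `ε`-cube with index `α`. -/
def gridCube (n : ℕ) (ε : ℝ) (α : Fin n → ℤ) : Set (En n) :=
  {x | ∀ i, (α i : ℝ) * ε ≤ x i ∧ x i ≤ ((α i : ℝ) + 1) * ε}

/-- The covering number `M(ε,Z)`: the number of grid `ε`-cubes meeting `Z`. -/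
def covNum (n : ℕ) (ε : ℝ) (Z : Set (En n)) : ℕ :=
  Set.ncard {α : Fin n → ℤ | (gridCube n ε α ∩ Z).Nonempty}

/-- Box (entropy) dimension of `Z`. -/
def dimE (n : ℕ) (Z : Set (En n)) : ℝ :=
  Filter.limsup (fun ε : ℝ => Real.log (covNum n ε Z) / Real.log (1 / ε))
    (nhdsWithin 0 (Set.Ioi 0))

/-- The straight line through `z₀` with direction `v`. -/
def lineThrough (n : ℕ) (z₀ v : En n) : Set (En n) :=
  {x | ∃ t : ℝ, x = z₀ + t • v}

/-- Orthogonal projection of `p` onto the line through `z₀` with unit direction `v`. -/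
def projLine (n : ℕ) (z₀ v p : En n) : En n :=
  z₀ + (inner ℝ (p - z₀) v : ℝ) • v

/-- Distance from `p` to the line through `z₀` with unit direction `v`. -/
def distLine (n : ℕ) (z₀ v p : En n) : ℝ :=
  dist p (projLine n z₀ v p)

/-- `ρ(ℓ,𝒵)`: max distance of the `d+1` points to the line. -/
def rhoLine (n d : ℕ) (z₀ v : En n) (z : Fin (d + 1) → En n) : ℝ :=
  ⨆ i, distLine n z₀ v (z i)

/-- `κ(ℓ,𝒵)`: min distance between projections of the `d+1` points onto the line. -/
def kappaLine (n d : ℕ) (z₀ v : En n) (z : Fin (d + 1) → En n) : ℝ :=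
  ⨅ p : {q : Fin (d + 1) × Fin (d + 1) // q.1 ≠ q.2},
    dist (projLine n z₀ v (z (p : Fin (d + 1) × Fin (d + 1)).1))
      (projLine n z₀ v (z (p : Fin (d + 1) × Fin (d + 1)).2))

/-- Pointwise approximate `ad`-thickness `ν̄_d(Z,z₀)`. -/
def barNuZpt (n d : ℕ) (Z : Set (En n)) (z₀ : En n) : ℝ :=
  sInf {m : ℝ | ∃ v : En n, ‖v‖ = 1 ∧
    (lineThrough n z₀ v ∩ Metric.closedBall (0 : En n) (1 / 3)).Nonempty ∧
    ∃ z : Fin (d + 1) → En n, Function.Injective z ∧ (∀ i, z i ∈ Z) ∧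
      m = rhoLine n d z₀ v z / (kappaLine n d z₀ v z) ^ d}

/-- Approximate `ad`-thickness `ν̄_d(Z)`. -/
def barNuZ (n d : ℕ) (Z : Set (En n)) : ℝ :=
  ⨆ z₀ : Metric.sphere (0 : En n) 1, barNuZpt n d Z (z₀ : En n)

/-- The axis-parallel cube with corner `a` and side `s`. -/
def cube (n : ℕ) (a : En n) (s : ℝ) : Set (En n) :=
  {x | ∀ i, a i ≤ x i ∧ x i ≤ a i + s}

/-- `Z` is `h`-dense in the cube with corner `a` and side `s`. -/
def hDense (n : ℕ) (a : En n) (s h : ℝ) (Z : Set (En n)) : Prop :=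
  ∀ b : En n, (∀ i, a i ≤ b i ∧ b i + h ≤ a i + s) → (Z ∩ cube n b h).Nonempty

/-- `μ_d(f,z)`: max over `1 ≤ k ≤ d` of the order-`k` partial derivatives of `f` at `z`. -/
def muF (n d : ℕ) (f : En n → ℝ) (z : En n) : ℝ :=
  ⨆ k : {k : ℕ // 1 ≤ k ∧ k ≤ d}, partialMax n (k : ℕ) f z

/-- `μ_d(f)`: max over the unit ball of `μ_d(f,z)`. -/
def muFglob (n d : ℕ) (f : En n → ℝ) : ℝ :=
  ⨆ z : Metric.closedBall (0 : En n) 1, muF n d f (z : En n)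

/-- `M_m(g)` for a function of one variable on `[-1,1]`. -/
def MIcc (m : ℕ) (g : ℝ → ℝ) : ℝ :=
  ⨆ t : Set.Icc (-1 : ℝ) 1, |iteratedDeriv m g (t : ℝ)|

end
lemma aux_coord_le_norm {n : ℕ} (x : En n) (i : Fin n) : |x i| ≤ ‖x‖ := by
  rw [EuclideanSpace.norm_eq, ← Real.sqrt_sq_eq_abs]
  apply Real.sqrt_le_sqrt
  have : x i ^ 2 ≤ ∑ j, ‖x j‖ ^ 2 := by
    have := Finset.single_le_sum (f := fun j => ‖x j‖ ^ 2)
      (fun j _ => by positivity) (Finset.mem_univ i)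
    simpa [Real.norm_eq_abs, sq_abs] using this
  simpa using this

lemma aux_norm_le_coords {n : ℕ} (hn : 1 ≤ n) {x : En n} {m : ℝ}
    (h : ∀ i, |x i| ≤ m) : ‖x‖ ≤ (n : ℝ) * m := by
  have hm : 0 ≤ m := le_trans (abs_nonneg _) (h ⟨0, hn⟩)
  rw [EuclideanSpace.norm_eq]
  have h1 : ∑ j, ‖x j‖ ^ 2 ≤ (n : ℝ) * m ^ 2 := by
    calc ∑ j, ‖x j‖ ^ 2 ≤ ∑ _j : Fin n, m ^ 2 := by
          apply Finset.sum_le_sum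
          intro j _
          have := h j
          rw [Real.norm_eq_abs]
          nlinarith [abs_nonneg (x j)]
      _ = (n : ℝ) * m ^ 2 := by simp [mul_comm]
  have h2 : (n : ℝ) * m ^ 2 ≤ ((n : ℝ) * m) ^ 2 := by
    have h1n : (1 : ℝ) ≤ (n : ℝ) := by exact_mod_cast hn
    nlinarith
  calc Real.sqrt (∑ j, ‖x j‖ ^ 2) ≤ Real.sqrt (((n:ℝ) * m) ^ 2) :=
        Real.sqrt_le_sqrt (h1.trans h2)
    _ = (n : ℝ) * m := Real.sqrt_sq (by positivity)

lemma aux_opNorm_le {k n : ℕ} (F : ContinuousMultilinearMap ℝ (fun _ : Fin k => En n) ℝ) {C : ℝ}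
    (hC : 0 ≤ C) (h : ∀ w : Fin k → En n, (∀ i, ‖w i‖ ≤ 1) → |F w| ≤ C) : ‖F‖ ≤ C := by
  apply ContinuousMultilinearMap.opNorm_le_bound hC
  intro m
  by_cases hm : ∀ i, m i ≠ 0
  · set w : Fin k → En n := fun i => ‖m i‖⁻¹ • m i with hw
    have hmw : m = fun i => ‖m i‖ • w i := by
      funext i
      rw [hw]; simp [smul_smul, mul_inv_cancel₀ (norm_ne_zero_iff.mpr (hm i))]
    have hFm : F m = (∏ i, ‖m i‖) • F w := by
      conv_lhs => rw [hmw]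
      exact F.map_smul_univ _ _
    rw [hFm]
    have hwle : ∀ i, ‖w i‖ ≤ 1 := by
      intro i
      rw [hw]; simp only [norm_smul, norm_inv, norm_norm]
      rw [inv_mul_cancel₀ (norm_ne_zero_iff.mpr (hm i))]
    have := h w hwle
    have hprod : (0:ℝ) ≤ ∏ i, ‖m i‖ := Finset.prod_nonneg fun i _ => norm_nonneg _
    rw [Real.norm_eq_abs, smul_eq_mul, abs_mul, abs_of_nonneg hprod, mul_comm C _]
    exact mul_le_mul_of_nonneg_left this hprod
  · push_neg at hm
    obtain ⟨i, hi⟩ := hm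
    have : F m = 0 := F.map_coord_zero i hi
    rw [this]
    simp only [norm_zero]
    positivity

lemma partialMax_nonneg (n l : ℕ) (f : En n → ℝ) (z : En n) : 0 ≤ partialMax n l f z :=
  Real.iSup_nonneg fun _ => abs_nonneg _

lemma aux_decomp {n : ℕ} (x : En n) : x = ∑ j, x j • EuclideanSpace.single j (1 : ℝ) := by
  ext i
  rw [show (∑ j, x j • EuclideanSpace.single j (1:ℝ)) i
      = EuclideanSpace.proj (𝕜 := ℝ) i (∑ j, x j • EuclideanSpace.single j (1:ℝ)) from rfl,
    map_sum]
  simp [EuclideanSpace.single_apply, Finset.sum_ite_eq']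

lemma aux_opNorm_le_partialMax {n : ℕ} (hn : 1 ≤ n) (l : ℕ) (f : En n → ℝ) (z : En n) :
    ‖iteratedFDeriv ℝ l f z‖ ≤ (n : ℝ) ^ l * partialMax n l f z := by
  have hP := partialMax_nonneg n l f z
  apply aux_opNorm_le _ (by positivity)
  intro w hw
  set F := iteratedFDeriv ℝ l f z with hF
  have hsum : F w = ∑ r : Fin l → Fin n,
      (∏ i, w i (r i)) • F (fun i => EuclideanSpace.single (r i) (1:ℝ)) := by
    have h1 : F w = F (fun i => ∑ j, w i j • EuclideanSpace.single j (1:ℝ)) := by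
      congr 1; funext i; exact aux_decomp (w i)
    rw [h1]
    rw [show (F : (Fin l → En n) → ℝ) = (F.toMultilinearMap : (Fin l → En n) → ℝ) from rfl]
    rw [F.toMultilinearMap.map_sum]
    congr 1
    funext r
    exact (F.toMultilinearMap.map_smul_univ _ _)
  rw [hsum]
  calc |∑ r : Fin l → Fin n, (∏ i, w i (r i)) • F (fun i => EuclideanSpace.single (r i) (1:ℝ))|
      ≤ ∑ r : Fin l → Fin n, |(∏ i, w i (r i)) • F (fun i => EuclideanSpace.single (r i) (1:ℝ))| :=
        Finset.abs_sum_le_sum_abs _ _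
    _ ≤ ∑ _r : Fin l → Fin n, partialMax n l f z := by
        apply Finset.sum_le_sum
        intro r _
        rw [smul_eq_mul, abs_mul]
        have h2 : |F fun i => EuclideanSpace.single (r i) (1:ℝ)| ≤ partialMax n l f z := by
          rw [partialMax]
          exact le_ciSup (f := fun α : Fin l → Fin n =>
            |F fun i => EuclideanSpace.single (α i) (1:ℝ)|)
            (Set.Finite.bddAbove (Set.finite_range _)) r
        have h3 : |∏ i, w i (r i)| ≤ 1 := by
          rw [Finset.abs_prod]
          apply Finset.prod_le_one (fun i _ => abs_nonneg _)
          intro i _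
          exact le_trans (aux_coord_le_norm (w i) (r i)) (hw i)
        nlinarith [abs_nonneg (F fun i => EuclideanSpace.single (r i) (1:ℝ))]
    _ = (n : ℝ) ^ l * partialMax n l f z := by
        rw [Finset.sum_const, Finset.card_univ]
        simp [nsmul_eq_mul]

lemma aux_1d {φ φ' φ'' : ℝ → ℝ} {h A B : ℝ} (hh : 0 < h)
    (hd1 : ∀ s, HasDerivAt φ (φ' s) s)
    (hd2 : ∀ s, HasDerivAt φ' (φ'' s) s)
    (hA : ∀ s ∈ Set.Icc 0 h, |φ s| ≤ A)
    (hB : ∀ s ∈ Set.Icc 0 h, |φ'' s| ≤ B) :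
    |φ' 0| ≤ 2 * A / h + h * B := by
  have hB0 : 0 ≤ B := le_trans (abs_nonneg _) (hB 0 ⟨le_refl _, le_of_lt hh⟩)
  obtain ⟨ξ, hξ, hslope⟩ := exists_hasDerivAt_eq_slope φ φ' hh
    (fun s _ => (hd1 s).continuousAt.continuousWithinAt) (fun s _ => hd1 s)
  have hξ0 : 0 < ξ := hξ.1
  have hξh : ξ < h := hξ.2
  have h1 : |φ' ξ| ≤ 2 * A / h := by
    rw [hslope, sub_zero, abs_div, abs_of_pos hh]
    have hnum : |φ h - φ 0| ≤ 2 * A := by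
      have t1 := hA h ⟨le_of_lt hh, le_refl _⟩
      have t2 := hA 0 ⟨le_refl _, le_of_lt hh⟩
      have := abs_sub (φ h) (φ 0)
      linarith
    gcongr
  have h2 : |φ' ξ - φ' 0| ≤ h * B := by
    obtain ⟨ζ, hζ, hslope2⟩ := exists_hasDerivAt_eq_slope φ' φ'' hξ0
      (fun s _ => (hd2 s).continuousAt.continuousWithinAt) (fun s _ => hd2 s)
    have hζmem : ζ ∈ Set.Icc 0 h := ⟨le_of_lt hζ.1, le_of_lt (lt_trans hζ.2 hξh)⟩
    have : φ' ξ - φ' 0 = φ'' ζ * ξ := by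
      rw [hslope2, sub_zero, div_mul_cancel₀ _ hξ0.ne']
    rw [this, abs_mul, abs_of_pos hξ0]
    have := hB ζ hζmem
    nlinarith [abs_nonneg (φ'' ζ)]
  calc |φ' 0| ≤ |φ' ξ| + |φ' ξ - φ' 0| := by
        have := abs_sub_abs_le_abs_sub (φ' 0) (φ' ξ)
        have := abs_sub_comm (φ' 0) (φ' ξ)
        have := abs_sub (φ' 0) (φ' ξ)
        calc |φ' 0| = |φ' ξ + (φ' 0 - φ' ξ)| := by ring_nf
          _ ≤ |φ' ξ| + |φ' 0 - φ' ξ| := abs_add_le _ _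
          _ = |φ' ξ| + |φ' ξ - φ' 0| := by rw [abs_sub_comm]
    _ ≤ 2 * A / h + h * B := add_le_add h1 h2

lemma aux_line {n d : ℕ} {f : En n → ℝ} (hf : ContDiff ℝ (d + 1 : ℕ) f) {j : ℕ} (hj : j ≤ d)
    (a b : En n) (v : Fin j → En n) (s : ℝ) :
    HasDerivAt (fun s : ℝ => iteratedFDeriv ℝ j f (a + s • b) v)
      (iteratedFDeriv ℝ (j + 1) f (a + s • b) (Fin.cons b v)) s := by
  have hline : HasDerivAt (fun s : ℝ => a + s • b) b s := by
    simpa using ((hasDerivAt_id s).smul_const b).const_add a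
  have hdiff : DifferentiableAt ℝ (iteratedFDeriv ℝ j f) (a + s • b) := by
    apply (hf.differentiable_iteratedFDeriv ?_).differentiableAt
    exact_mod_cast Nat.lt_succ_of_le hj
  have h1 : HasDerivAt (fun s : ℝ => iteratedFDeriv ℝ j f (a + s • b))
      (fderiv ℝ (iteratedFDeriv ℝ j f) (a + s • b) b) s :=
    hdiff.hasFDerivAt.comp_hasDerivAt s hline
  have h2 := (ContinuousMultilinearMap.apply ℝ (fun _ : Fin j => En n) ℝ v).hasFDerivAt.comp_hasDerivAt s h1
  rw [iteratedFDeriv_succ_apply_left]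
  exact h2

noncomputable def Nsup (n j : ℕ) (f : En n → ℝ) : ℝ :=
  ⨆ z : Metric.closedBall (0 : En n) 1, ‖iteratedFDeriv ℝ j f (z : En n)‖

lemma Nsup_nonneg (n j : ℕ) (f : En n → ℝ) : 0 ≤ Nsup n j f :=
  Real.iSup_nonneg fun _ => norm_nonneg _

lemma aux_bddAbove {n : ℕ} {g : En n → ℝ} (hg : Continuous g) :
    BddAbove (Set.range fun z : Metric.closedBall (0 : En n) 1 => g (z : En n)) := by
  rw [← Set.image_eq_range]
  exact ((isCompact_closedBall (0 : En n) 1).image hg).bddAbove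

lemma le_Nsup {n d : ℕ} {f : En n → ℝ} (hf : ContDiff ℝ (d + 1 : ℕ) f) {j : ℕ} (hj : j ≤ d + 1)
    {z : En n} (hz : z ∈ Metric.closedBall (0 : En n) 1) :
    ‖iteratedFDeriv ℝ j f z‖ ≤ Nsup n j f := by
  have hcont : Continuous fun x => ‖iteratedFDeriv ℝ j f x‖ :=
    (hf.continuous_iteratedFDeriv (by exact_mod_cast hj)).norm
  exact le_ciSup (aux_bddAbove hcont) (⟨z, hz⟩ : Metric.closedBall (0 : En n) 1)

lemma aux_prod_tail_le {k : ℕ} {w : Fin (k + 1) → En n} (hw : ∀ i, ‖w i‖ ≤ 1) :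
    ∏ i, ‖Fin.tail w i‖ ≤ 1 :=
  Finset.prod_le_one (fun i _ => norm_nonneg _) (fun i _ => hw i.succ)

lemma aux_abs_apply_le {n k : ℕ} (F : ContinuousMultilinearMap ℝ (fun _ : Fin k => En n) ℝ)
    (v : Fin k → En n) : |F v| ≤ ‖F‖ * ∏ i, ‖v i‖ := by
  rw [← Real.norm_eq_abs]; exact F.le_opNorm v

lemma aux_apply_le_one {n k : ℕ} {F : ContinuousMultilinearMap ℝ (fun _ : Fin k => En n) ℝ}
    {N : ℝ} (hN : ‖F‖ ≤ N) (hN0 : 0 ≤ N) {v : Fin k → En n} (hv : ∀ i, ‖v i‖ ≤ 1) :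
    |F v| ≤ N := by
  have h1 := aux_abs_apply_le F v
  have h2 : ∏ i, ‖v i‖ ≤ 1 := Finset.prod_le_one (fun i _ => norm_nonneg _) (fun i _ => hv i)
  have h3 : (0:ℝ) ≤ ∏ i, ‖v i‖ := Finset.prod_nonneg fun i _ => norm_nonneg _
  nlinarith [norm_nonneg F]

lemma aux_apply_cons_le {n k : ℕ} {F : ContinuousMultilinearMap ℝ (fun _ : Fin (k+1) => En n) ℝ}
    {N ε' : ℝ} (hN : ‖F‖ ≤ N) (hN0 : 0 ≤ N) (hε' : 0 ≤ ε') {a : En n} {v : Fin k → En n}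
    (ha : ‖a‖ ≤ ε') (hv : ∀ i, ‖v i‖ ≤ 1) :
    |F (Fin.cons a v)| ≤ N * ε' := by
  have h1 := aux_abs_apply_le F (Fin.cons a v)
  have h4 : ∏ i, ‖(Fin.cons a v : Fin (k+1) → En n) i‖ = ‖a‖ * ∏ i, ‖v i‖ := by
    rw [Fin.prod_univ_succ]; simp
  have h2 : ∏ i, ‖v i‖ ≤ 1 := Finset.prod_le_one (fun i _ => norm_nonneg _) (fun i _ => hv i)
  have h3 : (0:ℝ) ≤ ∏ i, ‖v i‖ := Finset.prod_nonneg fun i _ => norm_nonneg _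
  rw [h4] at h1
  have h5 : ‖F‖ * (‖a‖ * ∏ i, ‖v i‖) ≤ N * (ε' * 1) := by
    apply mul_le_mul hN ?_ (by positivity) hN0
    exact mul_le_mul ha h2 h3 hε'
  rw [mul_one] at h5
  linarith

lemma aux_step {n d : ℕ} {f : En n → ℝ} (hf : ContDiff ℝ (d + 1 : ℕ) f)
    {i : ℕ} (hi : i + 1 ≤ d) {ε : ℝ} (hε : 0 < ε) (hε1 : ε ≤ 1) :
    Nsup n (i + 1) f ≤ 2 / ε * Nsup n i f + 2 * ε * Nsup n (i + 2) f := by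
  have hN0 := Nsup_nonneg n i f
  have hN2 := Nsup_nonneg n (i + 2) f
  apply Real.iSup_le _ (by positivity)
  rintro ⟨z, hz⟩
  have hznorm : ‖(z : En n)‖ ≤ 1 := mem_closedBall_zero_iff.mp hz
  apply aux_opNorm_le _ (by positivity)
  intro w hw
  obtain ⟨z', hz'def⟩ : ∃ z', z' = (1 - ε) • (z : En n) := ⟨_, rfl⟩
  have hz'norm : ‖z'‖ ≤ 1 - ε := by
    rw [hz'def, norm_smul, Real.norm_eq_abs, abs_of_nonneg (by linarith)]
    nlinarith
  have hzz' : (z : En n) - z' = ε • (z : En n) := by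
    rw [hz'def]
    nth_rewrite 1 [← one_smul ℝ (z : En n)]
    rw [← sub_smul]; norm_num
  have hzz'norm : ‖(z : En n) - z'‖ ≤ ε := by
    rw [hzz', norm_smul, Real.norm_eq_abs, abs_of_pos hε]
    nlinarith
  -- part (a) : moving from z to z'
  have parta : |iteratedFDeriv ℝ (i+1) f (z : En n) w - iteratedFDeriv ℝ (i+1) f z' w|
      ≤ ε * Nsup n (i + 2) f := by
    have hψ : ∀ s : ℝ, HasDerivAt (fun s : ℝ => iteratedFDeriv ℝ (i+1) f (z' + s • ((z : En n) - z')) w)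
        (iteratedFDeriv ℝ (i+2) f (z' + s • ((z : En n) - z')) (Fin.cons ((z : En n) - z') w)) s :=
      fun s => aux_line hf (by omega) _ _ _ s
    obtain ⟨ξ, hξ, hs⟩ := exists_hasDerivAt_eq_slope
      (fun s : ℝ => iteratedFDeriv ℝ (i+1) f (z' + s • ((z : En n) - z')) w)
      (fun s : ℝ => iteratedFDeriv ℝ (i+2) f (z' + s • ((z : En n) - z')) (Fin.cons ((z : En n) - z') w))
      one_pos (fun s _ => (hψ s).continuousAt.continuousWithinAt) (fun s _ => hψ s)
    have heq : iteratedFDeriv ℝ (i+1) f (z : En n) w - iteratedFDeriv ℝ (i+1) f z' w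
        = iteratedFDeriv ℝ (i+2) f (z' + ξ • ((z : En n) - z')) (Fin.cons ((z : En n) - z') w) := by
      rw [hs]
      norm_num
    have hpt : z' + ξ • ((z : En n) - z') ∈ Metric.closedBall (0 : En n) 1 := by
      rw [mem_closedBall_zero_iff]
      have h2 : ‖ξ • ((z : En n) - z')‖ ≤ ξ * ε := by
        rw [norm_smul, Real.norm_eq_abs, abs_of_pos hξ.1]
        exact mul_le_mul_of_nonneg_left hzz'norm (le_of_lt hξ.1)
      calc ‖z' + ξ • ((z : En n) - z')‖ ≤ ‖z'‖ + ‖ξ • ((z : En n) - z')‖ := norm_add_le _ _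
        _ ≤ (1 - ε) + ξ * ε := add_le_add hz'norm h2
        _ ≤ 1 := by nlinarith [hξ.2]
    rw [heq]
    have := aux_apply_cons_le (le_Nsup hf (by omega) hpt) (Nsup_nonneg n (i+2) f)
      (le_of_lt hε) hzz'norm hw
    linarith [this, mul_comm (Nsup n (i+2) f) ε]
  -- part (b) : bound at z'
  have hmem : ∀ s ∈ Set.Icc (0:ℝ) ε, z' + s • (w 0) ∈ Metric.closedBall (0 : En n) 1 := by
    intro s hs
    rw [mem_closedBall_zero_iff]
    have h2 : ‖s • (w 0)‖ ≤ s := by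
      rw [norm_smul, Real.norm_eq_abs, abs_of_nonneg hs.1]
      calc s * ‖w 0‖ ≤ s * 1 := mul_le_mul_of_nonneg_left (hw 0) hs.1
        _ = s := mul_one s
    calc ‖z' + s • (w 0)‖ ≤ ‖z'‖ + ‖s • (w 0)‖ := norm_add_le _ _
      _ ≤ (1 - ε) + s := add_le_add hz'norm h2
      _ ≤ 1 := by linarith [hs.2]
  have htail : ∀ j : Fin i, ‖Fin.tail w j‖ ≤ 1 := fun j => hw j.succ
  have hconsw : ∀ j : Fin (i+1), ‖(Fin.cons (w 0) (Fin.tail w) : Fin (i+1) → En n) j‖ ≤ 1 := by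
    intro j
    refine Fin.cases ?_ ?_ j
    · simpa using hw 0
    · intro j'
      simpa using htail j'
  have partb : |iteratedFDeriv ℝ (i+1) f z' w|
      ≤ 2 * Nsup n i f / ε + ε * Nsup n (i + 2) f := by
    have hd1 : ∀ s : ℝ, HasDerivAt (fun s : ℝ => iteratedFDeriv ℝ i f (z' + s • (w 0)) (Fin.tail w))
        (iteratedFDeriv ℝ (i+1) f (z' + s • (w 0)) (Fin.cons (w 0) (Fin.tail w))) s :=
      fun s => aux_line hf (by omega) _ _ _ s
    have hd2 : ∀ s : ℝ, HasDerivAt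
        (fun s : ℝ => iteratedFDeriv ℝ (i+1) f (z' + s • (w 0)) (Fin.cons (w 0) (Fin.tail w)))
        (iteratedFDeriv ℝ (i+2) f (z' + s • (w 0)) (Fin.cons (w 0) (Fin.cons (w 0) (Fin.tail w)))) s :=
      fun s => aux_line hf (by omega) _ _ _ s
    have hA : ∀ s ∈ Set.Icc (0:ℝ) ε,
        |iteratedFDeriv ℝ i f (z' + s • (w 0)) (Fin.tail w)| ≤ Nsup n i f := by
      intro s hs
      exact aux_apply_le_one (le_Nsup hf (by omega) (hmem s hs)) (Nsup_nonneg _ _ _) htail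
    have hB : ∀ s ∈ Set.Icc (0:ℝ) ε,
        |iteratedFDeriv ℝ (i+2) f (z' + s • (w 0)) (Fin.cons (w 0) (Fin.cons (w 0) (Fin.tail w)))|
          ≤ Nsup n (i+2) f := by
      intro s hs
      have := aux_apply_cons_le (le_Nsup hf (by omega) (hmem s hs)) (Nsup_nonneg n (i+2) f)
        zero_le_one ((hw 0).trans (le_refl 1)) hconsw
      simpa using this
    have key := aux_1d hε hd1 hd2 hA hB
    have hφ'0 : iteratedFDeriv ℝ (i+1) f (z' + (0:ℝ) • (w 0)) (Fin.cons (w 0) (Fin.tail w))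
        = iteratedFDeriv ℝ (i+1) f z' w := by
      rw [Fin.cons_self_tail]
      norm_num
    rw [hφ'0] at key
    exact key
  calc |iteratedFDeriv ℝ (i+1) f (z : En n) w|
      ≤ |iteratedFDeriv ℝ (i+1) f z' w|
        + |iteratedFDeriv ℝ (i+1) f (z : En n) w - iteratedFDeriv ℝ (i+1) f z' w| := by
        have := abs_add_le (iteratedFDeriv ℝ (i+1) f z' w)
          (iteratedFDeriv ℝ (i+1) f (z : En n) w - iteratedFDeriv ℝ (i+1) f z' w)
        simpa using this
    _ ≤ (2 * Nsup n i f / ε + ε * Nsup n (i+2) f) + ε * Nsup n (i+2) f := add_le_add partb parta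
    _ = 2 / ε * Nsup n i f + 2 * ε * Nsup n (i + 2) f := by ring

lemma aux_claim1 {n d : ℕ} {f : En n → ℝ} (hf : ContDiff ℝ (d + 1 : ℕ) f)
    (hf0 : Nsup n 0 f ≤ 1) :
    ∀ j, 1 ≤ j → j ≤ d → ∀ ε : ℝ, 0 < ε → ε ≤ 1 →
      ε ^ j * Nsup n j f ≤ 2 * 16 ^ (j * j) + 4 * ε ^ (j + 1) * Nsup n (j + 1) f := by
  intro j
  induction j with
  | zero => omega
  | succ i ih =>
    intro _ hjd ε hε hε1
    have hNi1 := Nsup_nonneg n (i + 1) f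
    have hNi2 := Nsup_nonneg n (i + 2) f
    have hstep := aux_step hf (show i + 1 ≤ d from hjd) hε hε1
    rcases Nat.eq_zero_or_pos i with h0 | hpos
    · subst h0
      have hfe : ε * (2 / ε) = 2 := by field_simp
      have h1 : ε ^ 1 * Nsup n 1 f ≤ ε * (2 / ε * Nsup n 0 f + 2 * ε * Nsup n 2 f) := by
        rw [pow_one]
        exact mul_le_mul_of_nonneg_left hstep (le_of_lt hε)
      have h2 : ε * (2 / ε * Nsup n 0 f) ≤ 2 := by
        rw [← mul_assoc, hfe]
        nlinarith [Nsup_nonneg n 0 f]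
      have hsplit : ε * (2 / ε * Nsup n 0 f + 2 * ε * Nsup n 2 f)
          = ε * (2 / ε * Nsup n 0 f) + 2 * ε ^ 2 * Nsup n 2 f := by ring
      rw [hsplit] at h1
      have hq : (0:ℝ) ≤ ε ^ 2 * Nsup n 2 f := by positivity
      norm_num at h1 ⊢
      nlinarith
    · -- inductive step, i ≥ 1
      have hid : i ≤ d := by omega
      have hε16 : 0 < ε / 16 := by positivity
      have hε161 : ε / 16 ≤ 1 := by linarith
      have hIH := ih hpos hid (ε / 16) hε16 hε161
      -- (ε/16)^i * N i ≤ 2*16^(i*i) + 4*(ε/16)^(i+1) * N(i+1)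
      have h16pow : ((16:ℝ)) ^ i * (ε / 16) ^ i = ε ^ i := by
        rw [div_pow, ← mul_div_assoc, mul_comm, mul_div_assoc, div_self (by positivity), mul_one]
      have hA : ε ^ i * Nsup n i f ≤ 16 ^ i * (2 * 16 ^ (i * i)) + (1/4) * ε ^ (i + 1) * Nsup n (i + 1) f := by
        have := mul_le_mul_of_nonneg_left hIH (show (0:ℝ) ≤ 16 ^ i by positivity)
        rw [mul_add, ← mul_assoc, h16pow] at this
        refine this.trans ?_
        have hq : (16:ℝ) ^ i * (4 * (ε / 16) ^ (i + 1) * Nsup n (i + 1) f)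
            = (4 / 16) * ε ^ (i+1) * Nsup n (i + 1) f := by
          rw [div_pow]
          field_simp
          ring
        rw [hq]
        nlinarith [pow_nonneg (le_of_lt hε) (i+1)]
      -- now multiply step by ε^{i+1}
      have hstep2 : ε ^ (i+1) * Nsup n (i+1) f
          ≤ 2 * ε ^ i * Nsup n i f + 2 * ε ^ (i + 2) * Nsup n (i + 2) f := by
        have := mul_le_mul_of_nonneg_left hstep (show (0:ℝ) ≤ ε ^ (i+1) by positivity)
        refine this.trans_eq' (by ring) |>.trans ?_
        have he1 : ε ^ (i+1) * (2 / ε * Nsup n i f) = 2 * ε ^ i * Nsup n i f := by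
          field_simp
          ring
        have he2 : ε ^ (i+1) * (2 * ε * Nsup n (i + 2) f) = 2 * ε ^ (i+2) * Nsup n (i + 2) f := by
          ring
        rw [mul_add, he1, he2]
      have hfinal : ε ^ (i+1) * Nsup n (i+1) f
          ≤ 4 * 16 ^ i * (2 * 16 ^ (i * i)) + 4 * ε ^ (i + 2) * Nsup n (i + 2) f := by
        nlinarith [pow_nonneg (le_of_lt hε) i, Nsup_nonneg n i f]
      refine hfinal.trans ?_
      have hpow : (4:ℝ) * 16 ^ i * (2 * 16 ^ (i * i)) ≤ 2 * 16 ^ ((i+1) * (i+1)) := by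
        have : (i+1) * (i+1) = i * i + (2 * i + 1) := by ring
        rw [this, pow_add]
        have h1 : (4:ℝ) * 16 ^ i ≤ 16 ^ (2 * i + 1) := by
          have he : (16:ℝ) ^ (2*i+1) = 16 ^ i * 16 ^ i * 16 := by
            rw [show 2*i+1 = i + i + 1 by ring, pow_add, pow_add, pow_one]
          rw [he]
          have h2 : (1:ℝ) ≤ 16 ^ i := one_le_pow₀ (by norm_num)
          nlinarith
        have h2 := mul_le_mul_of_nonneg_right h1 (show (0:ℝ) ≤ 2 * 16 ^ (i*i) by positivity)
        exact h2.trans_eq (by ring)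
      linarith

lemma aux_LK {n d : ℕ} (hd : 1 ≤ d) {f : En n → ℝ} (hf : ContDiff ℝ (d + 1 : ℕ) f)
    (hf0 : Nsup n 0 f ≤ 1) :
    ∀ j, 1 ≤ j → j ≤ d + 1 →
      Nsup n j f ≤ (2 * 16 ^ (d*d) + 4) ^ (d+1) * (1 + Nsup n (d+1) f) := by
  set A : ℝ := 2 * 16 ^ (d*d) with hA
  set T : ℝ := Nsup n (d+1) f with hT
  have hA0 : (0:ℝ) ≤ A := by positivity
  have hT0 : (0:ℝ) ≤ T := Nsup_nonneg n (d+1) f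
  have hone : ∀ j, 1 ≤ j → j ≤ d → Nsup n j f ≤ 2 * 16 ^ (j*j) + 4 * Nsup n (j+1) f := by
    intro j hj1 hj2
    have := aux_claim1 hf hf0 j hj1 hj2 1 one_pos le_rfl
    simpa using this
  have hAj : ∀ j, j ≤ d → (2:ℝ) * 16 ^ (j*j) ≤ A := by
    intro j hj
    rw [hA]
    have : (16:ℝ) ^ (j*j) ≤ 16 ^ (d*d) :=
      pow_le_pow_right₀ (by norm_num) (Nat.mul_le_mul hj hj)
    linarith
  have claim2 : ∀ i, i ≤ d → Nsup n (d+1-i) f ≤ (A+4) ^ (i+1) * (1 + T) := by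
    intro i
    induction i with
    | zero =>
      intro _
      simp only [Nat.sub_zero, zero_add, pow_one]
      nlinarith
    | succ i ih =>
      intro hi1
      have hsub : d + 1 - (i+1) = d - i := by omega
      have hsub2 : (d - i) + 1 = d + 1 - i := by omega
      have hj1 : 1 ≤ d - i := by omega
      have hj2 : d - i ≤ d := by omega
      have h1 := hone (d-i) hj1 hj2
      rw [hsub2] at h1
      have h2 := ih (by omega)
      have hX1 : (1:ℝ) ≤ (A+4) ^ (i+1) * (1 + T) := by
        have : (1:ℝ) ≤ (A+4) ^ (i+1) := one_le_pow₀ (by linarith)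
        nlinarith
      have h3 : Nsup n (d-i) f ≤ A + 4 * ((A+4) ^ (i+1) * (1 + T)) := by
        have := hAj (d-i) hj2
        linarith
      rw [hsub]
      have hpow : (A+4) ^ (i+1+1) = (A+4) * (A+4) ^ (i+1) := by rw [pow_succ]; ring
      rw [hpow]
      nlinarith
  intro j hj1 hj2
  have hij : j = d + 1 - (d + 1 - j) := by omega
  have hi : d + 1 - j ≤ d := by omega
  have h := claim2 (d + 1 - j) hi
  rw [← hij] at h
  refine h.trans ?_
  have h1T : (0:ℝ) ≤ 1 + T := by linarith
  have : (A+4) ^ (d+1-j+1) ≤ (A+4) ^ (d+1) :=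
    pow_le_pow_right₀ (by linarith) (by omega)
  exact mul_le_mul_of_nonneg_right this h1T

lemma aux_FdB {n d : ℕ} {f : En n → ℝ} {ω : ℝ → En n}
    (hf : ContDiff ℝ (d + 1 : ℕ) f) (hω : ContDiff ℝ (d + 1 : ℕ) ω) (t : ℝ) :
    iteratedDeriv (d+1) (fun u => f (ω u)) t
      = ∑ c : OrderedFinpartition (d+1),
          iteratedFDeriv ℝ c.length f (ω t)
            (fun m => iteratedDeriv (c.partSize m) ω t) := by
  have hq : HasFTaylorSeriesUpTo ((d + 1 : ℕ) : ℕ∞) f (ftaylorSeries ℝ f) :=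
    contDiff_iff_ftaylorSeries.mp (by exact_mod_cast hf)
  have hp : HasFTaylorSeriesUpTo ((d + 1 : ℕ) : ℕ∞) ω (ftaylorSeries ℝ ω) :=
    contDiff_iff_ftaylorSeries.mp (by exact_mod_cast hω)
  have hcomp := HasFTaylorSeriesUpToOn.comp
    (hasFTaylorSeriesUpToOn_univ_iff.mpr hq)
    (hasFTaylorSeriesUpToOn_univ_iff.mpr hp) (Set.mapsTo_univ _ _)
  have hcomp' := hasFTaylorSeriesUpToOn_univ_iff.mp hcomp
  have heq := hcomp'.eq_iteratedFDeriv (m := d + 1) (by exact_mod_cast le_rfl) t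
  have h0 : iteratedDeriv (d+1) (fun u => f (ω u)) t
      = iteratedFDeriv ℝ (d+1) (f ∘ ω) t (fun _ => (1:ℝ)) := rfl
  rw [h0, ← heq]
  have h1 : (ftaylorSeries ℝ f (ω t)).taylorComp (ftaylorSeries ℝ ω t) (d+1)
      = ∑ c : OrderedFinpartition (d+1),
          (ftaylorSeries ℝ f (ω t)).compAlongOrderedFinpartition (ftaylorSeries ℝ ω t) c := rfl
  rw [h1, ContinuousMultilinearMap.sum_apply]
  congr 1

lemma aux_partition_sum {m : ℕ} (c : OrderedFinpartition m) : ∑ i, c.partSize i = m := by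
  have h := Fintype.card_congr c.equivSigma
  simpa [Fintype.card_sigma] using h

lemma aux_partition_cases {d : ℕ} (c : OrderedFinpartition (d+1)) :
    (c.length = d+1 ∧ ∀ m, c.partSize m = 1) ∨ (c.length ≤ d ∧ ∃ m, 2 ≤ c.partSize m) := by
  have hsum := aux_partition_sum c
  have hlen := c.length_le
  by_cases h : c.length = d + 1
  · left
    refine ⟨h, fun m => ?_⟩
    by_contra hm
    have h2 : 2 ≤ c.partSize m := by have := c.partSize_pos m; omega
    have hlt : ∑ _i : Fin c.length, 1 < ∑ i, c.partSize i :=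
      Finset.sum_lt_sum (fun i _ => c.partSize_pos i) ⟨m, Finset.mem_univ m, by omega⟩
    rw [hsum] at hlt
    simp only [Finset.sum_const, Finset.card_univ, Fintype.card_fin, smul_eq_mul, mul_one] at hlt
    omega
  · right
    refine ⟨by omega, ?_⟩
    by_contra hm
    push_neg at hm
    have hle : ∑ i, c.partSize i ≤ ∑ _i : Fin c.length, 1 :=
      Finset.sum_le_sum (fun i _ => by have := hm i; omega)
    rw [hsum] at hle
    simp only [Finset.sum_const, Finset.card_univ, Fintype.card_fin, smul_eq_mul, mul_one] at hle
    omega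

lemma aux_partialMax_le {n l : ℕ} (f : En n → ℝ) (z : En n) :
    partialMax n l f z ≤ ‖iteratedFDeriv ℝ l f z‖ := by
  apply Real.iSup_le _ (norm_nonneg _)
  intro α
  apply aux_apply_le_one le_rfl (norm_nonneg _)
  intro j
  simp [EuclideanSpace.norm_single]

lemma aux_vec_apply_norm {n k : ℕ} (ω : ℝ → En n) (t : ℝ) :
    ‖iteratedDeriv k ω t‖ ≤ ‖iteratedFDeriv ℝ k ω t‖ := by
  rw [iteratedDeriv_eq_iteratedFDeriv]
  calc ‖iteratedFDeriv ℝ k ω t (fun _ => (1:ℝ))‖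
      ≤ ‖iteratedFDeriv ℝ k ω t‖ * ∏ _i : Fin k, ‖(1:ℝ)‖ :=
        (iteratedFDeriv ℝ k ω t).le_opNorm _
    _ = ‖iteratedFDeriv ℝ k ω t‖ := by simp

/-- there are `C₁(n,d), C₃(n,d) > 0` such that for every `C^{d+1}` function `f`
on `B^n` with `M_0(f) = 1` and every admissible curve `ω` with `ν_d(ω) ≤ C₃`, with
`g = f ∘ ω`, `M_{d+1}(f) ≥ (1/2)·C₁·(M_{d+1}(g) − 1/10)`. -/
theorem stmt11 (n d : ℕ) (hn : 1 ≤ n) (hd : 1 ≤ d) :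
    ∃ C₁ C₃ : ℝ, 0 < C₁ ∧ 0 < C₃ ∧
      ∀ f : En n → ℝ, ContDiff ℝ (d + 1 : ℕ) f → Ml n 0 f = 1 →
        ∀ ω : ℝ → En n, ContDiff ℝ (d + 1 : ℕ) ω →
          (∀ t ∈ Set.Icc (-1 : ℝ) 1, ω t ∈ Metric.closedBall (0 : En n) 1) →
          (∀ t ∈ Set.Icc (-1 : ℝ) 1, 0 < curveDer n 1 ω t ∧ curveDer n 1 ω t ≤ 1) →
          nuCurve n d ω ≤ C₃ →
          Ml n (d + 1) f ≥ 1 / 2 * C₁ * (MIcc (d + 1) (fun u => f (ω u)) - 1 / 10) := by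
  classical
  have hn1 : (1:ℝ) ≤ (n:ℝ) := by exact_mod_cast hn
  set K : ℝ := (2 * 16 ^ (d*d) + 4) ^ (d+1) with hKdef
  have hK0 : (0:ℝ) < K := by positivity
  set NF : ℝ := (Fintype.card (OrderedFinpartition (d+1)) : ℝ) with hNFdef
  have hNF1 : (1:ℝ) ≤ NF := by
    rw [hNFdef]
    exact_mod_cast Fintype.card_pos
  have hNF0 : (0:ℝ) < NF := by linarith
  set B : ℝ := NF * ((n:ℝ)^(d+1) * (n:ℝ)^(d+1)) + (n:ℝ)^(d+1) with hBdef
  have hB0 : (0:ℝ) ≤ B := by positivity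
  set C₃ : ℝ := min 1 (1/(20 * NF * K * (n:ℝ)^(d+2))) with hC₃def
  have hC₃0 : 0 < C₃ := lt_min one_pos (by positivity)
  have hC₃1 : C₃ ≤ 1 := min_le_left _ _
  refine ⟨1/(B+1), C₃, by positivity, hC₃0, ?_⟩
  intro f hf hM0 ω hω hmem hspeed hnu
  -- M₀ bound
  have hpm0 : ∀ z : En n, partialMax n 0 f z = |f z| := by
    intro z
    rw [partialMax]
    haveI : Unique (Fin 0 → Fin n) := ⟨⟨fun i => i.elim0⟩, fun a => funext fun i => i.elim0⟩
    rw [ciSup_unique]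
    congr 1
  have hf0 : ∀ z ∈ Metric.closedBall (0 : En n) 1, |f z| ≤ 1 := by
    intro z hz
    have hbdd0 : BddAbove (Set.range fun z : Metric.closedBall (0 : En n) 1 =>
        partialMax n 0 f (z : En n)) := by
      have heq : (fun z : Metric.closedBall (0 : En n) 1 => partialMax n 0 f (z : En n))
          = fun z : Metric.closedBall (0 : En n) 1 => |f (z : En n)| := funext fun z => hpm0 _
      rw [heq]
      exact aux_bddAbove (hf.continuous.abs)
    have h1 : partialMax n 0 f z ≤ Ml n 0 f :=
      le_ciSup hbdd0 (⟨z, hz⟩ : Metric.closedBall (0 : En n) 1)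
    rw [hpm0, hM0] at h1
    exact h1
  have hNsup0 : Nsup n 0 f ≤ 1 := by
    apply Real.iSup_le _ zero_le_one
    rintro ⟨z, hz⟩
    rw [norm_iteratedFDeriv_zero, Real.norm_eq_abs]
    exact hf0 z hz
  -- P and T
  set P : ℝ := Ml n (d+1) f with hPdef
  have hP0 : (0:ℝ) ≤ P := Real.iSup_nonneg fun z => partialMax_nonneg _ _ _ _
  set T : ℝ := Nsup n (d+1) f with hTdef
  have hT0 : (0:ℝ) ≤ T := Nsup_nonneg _ _ _
  have hpmP : ∀ z ∈ Metric.closedBall (0 : En n) 1, partialMax n (d+1) f z ≤ P := by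
    have hcont : Continuous fun x => ‖iteratedFDeriv ℝ (d+1) f x‖ :=
      (hf.continuous_iteratedFDeriv (by exact_mod_cast le_rfl)).norm
    obtain ⟨C, hC⟩ := aux_bddAbove hcont
    have hbdd : BddAbove (Set.range fun z : Metric.closedBall (0 : En n) 1 =>
        partialMax n (d+1) f (z : En n)) := by
      refine ⟨C, ?_⟩
      rintro x ⟨z, rfl⟩
      exact (aux_partialMax_le f (z : En n)).trans (hC (Set.mem_range_self z))
    intro z hz
    exact le_ciSup hbdd (⟨z, hz⟩ : Metric.closedBall (0 : En n) 1)
  have hTP : T ≤ (n:ℝ)^(d+1) * P := by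
    rw [hTdef, Nsup]
    apply Real.iSup_le _ (by positivity)
    rintro ⟨z, hz⟩
    calc ‖iteratedFDeriv ℝ (d+1) f (z : En n)‖
        ≤ (n:ℝ)^(d+1) * partialMax n (d+1) f (z : En n) := aux_opNorm_le_partialMax hn _ f _
      _ ≤ (n:ℝ)^(d+1) * P := mul_le_mul_of_nonneg_left (hpmP _ hz) (by positivity)
  have hLK := aux_LK hd hf hNsup0
  -- curve bounds
  have hIccne : Set.Nonempty (Set.Icc (-1:ℝ) 1) := ⟨0, by norm_num⟩
  have hsumcont : Continuous fun t => ∑ k ∈ Finset.range (d+2), ‖iteratedFDeriv ℝ k ω t‖ := by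
    apply continuous_finset_sum
    intro k hk
    have hk2 : k ≤ d + 1 := Nat.lt_succ_iff.mp (Finset.mem_range.mp hk)
    exact (hω.continuous_iteratedFDeriv (by exact_mod_cast hk2)).norm
  obtain ⟨t₀, ht₀, hmax⟩ := isCompact_Icc.exists_isMaxOn hIccne hsumcont.continuousOn
  set Cb : ℝ := ∑ k ∈ Finset.range (d+2), ‖iteratedFDeriv ℝ k ω t₀‖ with hCbdef
  have hCb0 : (0:ℝ) ≤ Cb := Finset.sum_nonneg fun k _ => norm_nonneg _
  have hCb : ∀ t ∈ Set.Icc (-1:ℝ) 1, ∀ k, k ≤ d+1 → ‖iteratedFDeriv ℝ k ω t‖ ≤ Cb := by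
    intro t ht k hk
    have hstep : ‖iteratedFDeriv ℝ k ω t‖
        ≤ ∑ j ∈ Finset.range (d+2), ‖iteratedFDeriv ℝ j ω t‖ := by
      refine Finset.single_le_sum (f := fun j => ‖iteratedFDeriv ℝ j ω t‖)
        (fun j _ => norm_nonneg _) ?_
      exact Finset.mem_range.mpr (by omega)
    exact hstep.trans (hmax ht)
  have hcoord_le : ∀ t : ℝ, ∀ k : ℕ, ∀ i : Fin n,
      |iteratedDeriv k ω t i| ≤ ‖iteratedFDeriv ℝ k ω t‖ :=
    fun t k i => (aux_coord_le_norm _ i).trans (aux_vec_apply_norm ω t)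
  have hcurve_le : ∀ t ∈ Set.Icc (-1:ℝ) 1, ∀ k, k ≤ d + 1 → curveDer n k ω t ≤ Cb := by
    intro t ht k hk
    apply Real.iSup_le _ hCb0
    intro i
    exact (hcoord_le t k i).trans (hCb t ht k hk)
  have hnuAt_le : ∀ t ∈ Set.Icc (-1:ℝ) 1, nuAt n d ω t ≤ Cb := by
    intro t ht
    apply Real.iSup_le _ hCb0
    rintro ⟨k, hk2, hk⟩
    exact hcurve_le t ht k hk
  have hnuAtC₃ : ∀ t ∈ Set.Icc (-1:ℝ) 1, nuAt n d ω t ≤ C₃ := by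
    intro t ht
    refine le_trans ?_ hnu
    rw [nuCurve]
    refine le_ciSup (f := fun t : Set.Icc (-1:ℝ) 1 => nuAt n d ω (t:ℝ)) ?_ ⟨t, ht⟩
    refine ⟨Cb, ?_⟩
    rintro x ⟨⟨t', ht'⟩, rfl⟩
    exact hnuAt_le t' ht'
  have hhigh : ∀ t ∈ Set.Icc (-1:ℝ) 1, ∀ k, 2 ≤ k → k ≤ d + 1 → ∀ i : Fin n,
      |iteratedDeriv k ω t i| ≤ C₃ := by
    intro t ht k hk2 hk i
    have h1 : |iteratedDeriv k ω t i| ≤ curveDer n k ω t := by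
      rw [curveDer]
      exact le_ciSup (f := fun i : Fin n => |iteratedDeriv k ω t i|)
        (Set.Finite.bddAbove (Set.finite_range _)) i
    have h2 : curveDer n k ω t ≤ nuAt n d ω t := by
      rw [nuAt]
      refine le_ciSup (f := fun k : {k : ℕ // 2 ≤ k ∧ k ≤ d + 1} => curveDer n (k:ℕ) ω t)
        ?_ ⟨k, hk2, hk⟩
      refine ⟨Cb, ?_⟩
      rintro x ⟨⟨k', hk'⟩, rfl⟩
      exact hcurve_le t ht k' hk'.2
    exact h1.trans (h2.trans (hnuAtC₃ t ht))
  have hvec_high : ∀ t ∈ Set.Icc (-1:ℝ) 1, ∀ k, 2 ≤ k → k ≤ d + 1 →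
      ‖iteratedDeriv k ω t‖ ≤ (n:ℝ) * C₃ :=
    fun t ht k hk2 hk => aux_norm_le_coords hn (hhigh t ht k hk2 hk)
  have hvec1 : ∀ t ∈ Set.Icc (-1:ℝ) 1, ‖iteratedDeriv 1 ω t‖ ≤ (n:ℝ) := by
    intro t ht
    have h1 : ∀ i : Fin n, |iteratedDeriv 1 ω t i| ≤ 1 := by
      intro i
      have := (hspeed t ht).2
      refine le_trans ?_ this
      rw [curveDer]
      exact le_ciSup (f := fun i : Fin n => |iteratedDeriv 1 ω t i|)
        (Set.Finite.bddAbove (Set.finite_range _)) i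
    simpa using aux_norm_le_coords hn h1
  have hvec_all : ∀ t ∈ Set.Icc (-1:ℝ) 1, ∀ k, 1 ≤ k → k ≤ d + 1 →
      ‖iteratedDeriv k ω t‖ ≤ (n:ℝ) := by
    intro t ht k hk1 hk
    rcases eq_or_lt_of_le hk1 with h1 | h2
    · rw [← h1]; exact hvec1 t ht
    · refine (hvec_high t ht k (by omega) hk).trans ?_
      nlinarith
  -- the Faa di Bruno estimate
  set RB : ℝ := (n:ℝ)^(d+1) * ((n:ℝ)^(d+1) * P) + K * (1+T) * ((n:ℝ)^(d+2) * C₃) with hRBdef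
  have hRB1 : (0:ℝ) ≤ (n:ℝ)^(d+1) * ((n:ℝ)^(d+1) * P) := by positivity
  have hRB2 : (0:ℝ) ≤ K * (1+T) * ((n:ℝ)^(d+2) * C₃) := by positivity
  have hMg : MIcc (d+1) (fun u => f (ω u)) ≤ NF * RB := by
    rw [MIcc]
    apply Real.iSup_le _ (by positivity)
    rintro ⟨t, ht⟩
    rw [aux_FdB hf hω t]
    have hterm : ∀ c : OrderedFinpartition (d+1),
        |iteratedFDeriv ℝ c.length f (ω t) (fun m => iteratedDeriv (c.partSize m) ω t)| ≤ RB := by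
      intro c
      have happ := aux_abs_apply_le (iteratedFDeriv ℝ c.length f (ω t))
        (fun m => iteratedDeriv (c.partSize m) ω t)
      rcases aux_partition_cases c with ⟨hlen, honep⟩ | ⟨hlen, m₀, hm₀⟩
      · -- pure case
        have hNval : ‖iteratedFDeriv ℝ c.length f (ω t)‖ ≤ (n:ℝ)^(d+1) * P := by
          refine (le_Nsup hf (by omega) (hmem t ht)).trans ?_
          rw [hlen]
          exact hTP
        have hprod : ∏ m, ‖iteratedDeriv (c.partSize m) ω t‖ ≤ (n:ℝ)^(d+1) := by
          calc ∏ m, ‖iteratedDeriv (c.partSize m) ω t‖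
              ≤ ∏ _m : Fin c.length, (n:ℝ) := by
                apply Finset.prod_le_prod (fun m _ => norm_nonneg _)
                intro m _
                rw [honep m]
                exact hvec1 t ht
            _ = (n:ℝ) ^ c.length := by simp
            _ = (n:ℝ) ^ (d+1) := by rw [hlen]
        have : |iteratedFDeriv ℝ c.length f (ω t) (fun m => iteratedDeriv (c.partSize m) ω t)|
            ≤ ((n:ℝ)^(d+1) * P) * (n:ℝ)^(d+1) := by
          refine happ.trans ?_
          exact mul_le_mul hNval hprod (Finset.prod_nonneg fun m _ => norm_nonneg _) (by positivity)
        refine this.trans ?_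
        rw [hRBdef]
        nlinarith
      · -- mixed case
        have hlenpos : 1 ≤ c.length := c.length_pos (by omega)
        have hNval : ‖iteratedFDeriv ℝ c.length f (ω t)‖ ≤ K * (1+T) := by
          refine (le_Nsup hf (by omega) (hmem t ht)).trans ?_
          exact hLK c.length hlenpos (by omega)
        have hfac : ∀ m : Fin c.length, ‖iteratedDeriv (c.partSize m) ω t‖ ≤ (n:ℝ) := by
          intro m
          exact hvec_all t ht (c.partSize m) (c.partSize_pos m) (by
            have := c.partSize_le m; omega)
        have hprod : ∏ m, ‖iteratedDeriv (c.partSize m) ω t‖ ≤ ((n:ℝ) * C₃) * (n:ℝ)^(d+1) := by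
          rw [← Finset.mul_prod_erase Finset.univ _ (Finset.mem_univ m₀)]
          have h1 : ‖iteratedDeriv (c.partSize m₀) ω t‖ ≤ (n:ℝ) * C₃ :=
            hvec_high t ht (c.partSize m₀) hm₀ (by have := c.partSize_le m₀; omega)
          have h2 : ∏ m ∈ Finset.univ.erase m₀, ‖iteratedDeriv (c.partSize m) ω t‖
              ≤ (n:ℝ)^(d+1) := by
            calc ∏ m ∈ Finset.univ.erase m₀, ‖iteratedDeriv (c.partSize m) ω t‖
                ≤ ∏ _m ∈ Finset.univ.erase m₀, (n:ℝ) :=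
                  Finset.prod_le_prod (fun m _ => norm_nonneg _) (fun m _ => hfac m)
              _ = (n:ℝ) ^ (Finset.univ.erase m₀).card := by rw [Finset.prod_const]
              _ ≤ (n:ℝ) ^ (d+1) := by
                  apply pow_le_pow_right₀ hn1
                  have : (Finset.univ.erase m₀).card = c.length - 1 := by
                    rw [Finset.card_erase_of_mem (Finset.mem_univ m₀)]
                    simp
                  omega
          exact mul_le_mul h1 h2 (Finset.prod_nonneg fun m _ => norm_nonneg _) (by positivity)
        have : |iteratedFDeriv ℝ c.length f (ω t) (fun m => iteratedDeriv (c.partSize m) ω t)|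
            ≤ (K * (1+T)) * (((n:ℝ) * C₃) * (n:ℝ)^(d+1)) := by
          refine happ.trans ?_
          exact mul_le_mul hNval hprod (Finset.prod_nonneg fun m _ => norm_nonneg _) (by positivity)
        refine this.trans ?_
        rw [hRBdef]
        have hpow : ((n:ℝ) * C₃) * (n:ℝ)^(d+1) = (n:ℝ)^(d+2) * C₃ := by
          rw [pow_succ]
          ring
        rw [hpow]
        linarith [hRB1]
    calc |∑ c : OrderedFinpartition (d+1),
        iteratedFDeriv ℝ c.length f (ω t) (fun m => iteratedDeriv (c.partSize m) ω t)|
        ≤ ∑ c : OrderedFinpartition (d+1),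
          |iteratedFDeriv ℝ c.length f (ω t) (fun m => iteratedDeriv (c.partSize m) ω t)| :=
          Finset.abs_sum_le_sum_abs _ _
      _ ≤ ∑ _c : OrderedFinpartition (d+1), RB := Finset.sum_le_sum fun c _ => hterm c
      _ = NF * RB := by
          rw [Finset.sum_const, Finset.card_univ, nsmul_eq_mul, hNFdef]
  -- final arithmetic
  have hC₃small : NF * K * ((n:ℝ)^(d+2)) * C₃ ≤ 1/20 := by
    have h1 : C₃ ≤ 1/(20 * NF * K * (n:ℝ)^(d+2)) := min_le_right _ _
    have h3 := mul_le_mul_of_nonneg_left h1 (show (0:ℝ) ≤ NF * K * (n:ℝ)^(d+2) by positivity)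
    have h4 : NF * K * (n:ℝ)^(d+2) * (1/(20 * NF * K * (n:ℝ)^(d+2))) = 1/20 := by
      field_simp
    calc NF * K * ((n:ℝ)^(d+2)) * C₃ ≤ NF * K * (n:ℝ)^(d+2) * (1/(20 * NF * K * (n:ℝ)^(d+2))) := by
          linarith
      _ = 1/20 := h4
  have hMgB : MIcc (d+1) (fun u => f (ω u)) ≤ 1/20 + B * P := by
    refine hMg.trans ?_
    rw [hRBdef, hBdef]
    have h1 : NF * (K * (1+T) * ((n:ℝ)^(d+2) * C₃)) ≤ (1/20) * (1+T) := by
      have := mul_le_mul_of_nonneg_right hC₃small (show (0:ℝ) ≤ 1 + T by linarith)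
      nlinarith
    have h2 : (1:ℝ) + T ≤ 1 + (n:ℝ)^(d+1) * P := by linarith
    nlinarith [pow_nonneg (le_trans zero_le_one hn1) (d+1), hP0, hNF0.le]
  -- conclude
  set Mg : ℝ := MIcc (d+1) (fun u => f (ω u)) with hMgdef
  have hc : (1/(B+1)) * (B+1) = 1 := by field_simp
  have hc0 : (0:ℝ) ≤ 1/(B+1) := by positivity
  rcases le_or_gt Mg (1/10) with hcase | hcase
  · have : 1 / 2 * (1/(B+1)) * (Mg - 1 / 10) ≤ 0 := by nlinarith
    linarith
  · have h1 : Mg - 1/10 ≤ B * P := by linarith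
    have h2 : 1 / 2 * (1/(B+1)) * (Mg - 1 / 10) ≤ 1 / 2 * (1/(B+1)) * (B * P) := by
      nlinarith
    have h3 : 1 / 2 * (1/(B+1)) * (B * P) ≤ P := by
      nlinarith [mul_nonneg hB0 hP0]
    linarith
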